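/- arXiv:math/0511430 — 3 statements merged into one kernel-verified Lean document; each statement's English description precedes it below -/
import Mathlib

section
/- In U(gl(2|1))[[t]] the elements T and T' are mutually inverse and satisfy Ohn-type relations with H₁: T·T' = T'·T = 1, [H₁, T] = T² − 1, and [H₁, T'] = T'² − 1; moreover [T, F₁] = (t/2)(H₁T + TH₁), [T', F₁] = −(t/2)(H₁T' + T'H₁), and [H₁, F₁] = −(1/2)(TF₁ + F₁T + T'F₁ + F₁T'). (This exhibits the embedding of the Jordanian algebra U_h(sl(2)) inside U_h(sl(2|1)).) -/
noncomputable section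

namespace SuperJordanian

open scoped BigOperators

/-- The generalized binomial coefficient `C(1/2, n)`. -/
def cHalf (n : ℕ) : ℂ :=
  (∏ i ∈ Finset.range n, ((1 : ℂ) / 2 - (i : ℂ))) / (n.factorial : ℂ)

/-- Parity for `gl(2|1)`: `p(i,j) = 1` iff exactly one of `i`, `j` equals the third index. -/
def par (i j : Fin 3) : ℕ :=
  if (i = 2 ∧ j ≠ 2) ∨ (i ≠ 2 ∧ j = 2) then 1 else 0

/-- The generator `e_{ij}` in the free algebra. -/
def gen (i j : Fin 3) : FreeAlgebra ℂ (Fin 3 × Fin 3) := FreeAlgebra.ι ℂ (i, j)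

/-- Defining relations of the enveloping algebra `U(gl(2|1))`:
`e_{ij} e_{kl} - (-1)^{p(i,j)p(k,l)} e_{kl} e_{ij}
  = δ_{jk} e_{il} - (-1)^{p(i,j)p(k,l)} δ_{li} e_{kj}`. -/
inductive Rel : FreeAlgebra ℂ (Fin 3 × Fin 3) → FreeAlgebra ℂ (Fin 3 × Fin 3) → Prop
  | mk (i j k l : Fin 3) :
      Rel (gen i j * gen k l - ((-1 : ℂ) ^ (par i j * par k l)) • (gen k l * gen i j))
        ((if j = k then gen i l else 0)
          - ((-1 : ℂ) ^ (par i j * par k l)) • (if l = i then gen k j else 0))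

/-- The enveloping algebra `U = U(gl(2|1))`. -/
abbrev U : Type := RingQuot Rel

/-- The image of `e_{ij}` in `U`. -/
def e (i j : Fin 3) : U := RingQuot.mkAlgHom ℂ Rel (gen i j)

/-- The formal power series ring `U[[t]]`. -/
abbrev V : Type := PowerSeries U

/-- The central formal variable `t`. -/
def tv : V := PowerSeries.X

/-- The inclusion `U → U[[t]]` as constant power series. -/
def C : U →+* V := PowerSeries.C

def e₁ : U := e 0 1
def f₁ : U := e 1 0
def h₁ : U := e 0 0 - e 1 1
def e₂ : U := e 1 2
def f₂ : U := e 2 1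
def h₂ : U := e 1 1 + e 2 2
def e₃ : U := e 0 2
def f₃ : U := e 2 0
def h₃ : U := h₁ + h₂

/-- `s = Σ_{n ≥ 0} C(1/2, n) t^{2n} e₁^{2n}`, so that `s² = 1 + t² e₁²`. -/
def s : V := PowerSeries.mk fun m => if m % 2 = 0 then cHalf (m / 2) • (e₁ ^ m) else 0

def T : V := tv * C e₁ + s
def T' : V := -(tv * C e₁) + s
def H₁ : V := s * C h₁
def F₁ : V := C f₁ - ((1 : ℂ) / 4) • (tv ^ 2 * C (e₁ * (h₁ ^ 2 - 1)))
def H₂ : V := C h₂ - ((1 : ℂ) / 2) • (tv ^ 2 * C (e₁ ^ 2 * h₁))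
def E₂ : V := C e₂ - ((1 : ℂ) / 4) • (tv ^ 2 * C (e₁ * e₃ * (2 * h₁ + 1)))
def F₂ : V := C f₂
def H₃ : V := C h₃ + ((1 : ℂ) / 2) • (tv ^ 2 * C (e₁ ^ 2 * h₁))
def E₃ : V := C e₃
def F₃ : V := C f₃ + ((1 : ℂ) / 4) • (tv ^ 2 * C (e₁ * f₂ * (2 * h₁ + 1)))

/-- Commutator `[a, b] = ab - ba`. -/
def br (a b : V) : V := a * b - b * a

/-- Anticommutator `{a, b} = ab + ba`. -/
def ac (a b : V) : V := a * b + b * a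


/-! ### Auxiliary development -/

/-- Scalar power series. -/
abbrev Sc : Type := PowerSeries ℂ

/-- The scalar variable. -/
noncomputable def Xs : Sc := PowerSeries.X

/-- Formal derivative on scalar power series. -/
noncomputable def D (p : Sc) : Sc := PowerSeries.derivative ℂ p

/-- `L p = 2 X p'`. -/
noncomputable def L (p : Sc) : Sc := 2 * (Xs * D p)

/-- The scalar square-root series `(1+X²)^(1/2)`. -/
noncomputable def gs : Sc := PowerSeries.mk fun m => if m % 2 = 0 then cHalf (m / 2) else 0

/-- The scalar coefficient `X/4`. -/
noncomputable def rr : Sc := PowerSeries.C (R := ℂ) (1/4) * Xs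

/-- The embedding `p(X) ↦ p(t e₁)`. -/
noncomputable def ψ (p : Sc) : V := PowerSeries.mk fun n => (PowerSeries.coeff (R := ℂ) n p) • e₁ ^ n

lemma coeff_psi (p : Sc) (n : ℕ) :
    (PowerSeries.coeff (R := U) n) (ψ p) = (PowerSeries.coeff (R := ℂ) n p) • e₁ ^ n :=
  PowerSeries.coeff_mk _ _

/-! #### Derivative lemmas -/

lemma D_add (p q : Sc) : D (p + q) = D p + D q := PowerSeries.derivativeFun_add p q

lemma D_sub (p q : Sc) : D (p - q) = D p - D q := by
  ext n
  simp [D, PowerSeries.coeff_derivativeFun, map_sub, sub_mul]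

lemma D_mul (p q : Sc) : D (p * q) = p * D q + q * D p := by
  simp only [D, Derivation.leibniz, smul_eq_mul]

lemma D_one : D 1 = 0 := PowerSeries.derivativeFun_one

lemma D_C (c : ℂ) : D (PowerSeries.C (R := ℂ) c) = 0 := PowerSeries.derivative_C

lemma D_X : D Xs = 1 := by
  ext n
  rw [D, Xs, PowerSeries.coeff_derivativeFun, PowerSeries.coeff_X, PowerSeries.coeff_one]
  rcases n with _ | m
  · norm_num
  · rw [if_neg (by omega), if_neg (by omega), zero_mul]

lemma D_sq : D (Xs ^ 2) = 2 * Xs := by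
  rw [sq, D_mul, D_X, mul_one]; ring

lemma D_C_mul (c : ℂ) (p : Sc) :
    D (PowerSeries.C (R := ℂ) c * p) = PowerSeries.C (R := ℂ) c * D p := by
  rw [D_mul, D_C, mul_zero, add_zero]

lemma D_two_mul (p : Sc) : D (2 * p) = 2 * D p := by
  rw [show (2 : Sc) = PowerSeries.C (R := ℂ) 2 from (map_ofNat _ 2).symm, D_C_mul]

lemma D_X_mul (q : Sc) : D (Xs * q) = Xs * D q + q := by
  rw [D_mul, D_X, mul_one]

lemma L_def (p : Sc) : L p = 2 * (Xs * D p) := rfl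

lemma hc4 : PowerSeries.C (R := ℂ) (1/4) * 4 = 1 := by
  rw [show (4 : Sc) = PowerSeries.C (R := ℂ) 4 from (map_ofNat _ 4).symm, ← map_mul]
  norm_num

/-! #### `cHalf` and the square root series -/

lemma cHalf_zero : cHalf 0 = 1 := by simp [cHalf]

lemma cHalf_succ (n : ℕ) :
    ((n : ℂ) + 1) * cHalf (n + 1) = ((1 : ℂ)/2 - n) * cHalf n := by
  unfold cHalf
  rw [Finset.prod_range_succ, Nat.factorial_succ]
  have h1 : (n.factorial : ℂ) ≠ 0 := Nat.cast_ne_zero.2 n.factorial_ne_zero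
  have h2 : ((n : ℂ) + 1) ≠ 0 := Nat.cast_add_one_ne_zero n
  push_cast
  field_simp

lemma coeff_gs (n : ℕ) :
    PowerSeries.coeff (R := ℂ) n gs = if n % 2 = 0 then cHalf (n / 2) else 0 :=
  PowerSeries.coeff_mk _ _

lemma coeff_gs_even (k : ℕ) : PowerSeries.coeff (R := ℂ) (2 * k) gs = cHalf k := by
  rw [coeff_gs, if_pos (by omega), show 2 * k / 2 = k by omega]

lemma coeff_gs_odd (k : ℕ) : PowerSeries.coeff (R := ℂ) (2 * k + 1) gs = 0 := by
  rw [coeff_gs, if_neg (by omega)]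

/-- The ODE `(1+X²) g' = X g`. -/
lemma ode : (1 + Xs ^ 2) * D gs = Xs * gs := by
  have hsplit : (1 + Xs ^ 2) * D gs = D gs + D gs * Xs ^ 2 := by ring
  have hX : Xs * gs = gs * Xs ^ 1 := by ring
  rw [hsplit, hX]
  ext n
  rw [map_add, Xs, PowerSeries.coeff_mul_X_pow', PowerSeries.coeff_mul_X_pow', D,
    PowerSeries.coeff_derivativeFun]
  rcases Nat.even_or_odd n with ⟨k, hk⟩ | ⟨k, hk⟩
  · -- n even : everything vanishes
    have h1 : PowerSeries.coeff (R := ℂ) (n + 1) gs = 0 := by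
      rw [show n + 1 = 2 * k + 1 by omega]; exact coeff_gs_odd k
    rw [h1, zero_mul, zero_add]
    rcases Nat.lt_or_ge n 2 with hn | hn
    · rw [if_neg (by omega), if_neg (by omega)]
    · rw [if_pos (by omega), if_pos (by omega), PowerSeries.coeff_derivativeFun]
      have h2 : PowerSeries.coeff (R := ℂ) (n - 2 + 1) gs = 0 := by
        rw [show n - 2 + 1 = 2 * (k - 1) + 1 by omega]; exact coeff_gs_odd (k - 1)
      have h3 : PowerSeries.coeff (R := ℂ) (n - 1) gs = 0 := by
        rw [show n - 1 = 2 * (k - 1) + 1 by omega]; exact coeff_gs_odd (k - 1)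
      rw [h2, h3, zero_mul]
  · -- n odd, n = 2k+1
    rcases Nat.eq_zero_or_pos k with hk0 | hkpos
    · subst hk0
      have h1 : PowerSeries.coeff (R := ℂ) (n + 1) gs = cHalf 1 := by
        rw [show n + 1 = 2 * 1 by omega]; exact coeff_gs_even 1
      have h2 : PowerSeries.coeff (R := ℂ) (n - 1) gs = cHalf 0 := by
        rw [show n - 1 = 2 * 0 by omega]; exact coeff_gs_even 0
      rw [h1, if_neg (by omega), if_pos (by omega), h2, add_zero]
      have hcs := cHalf_succ 0
      rw [show n = 1 by omega]
      push_cast at hcs ⊢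
      linear_combination 2 * hcs
    · have h1 : PowerSeries.coeff (R := ℂ) (n + 1) gs = cHalf (k + 1) := by
        rw [show n + 1 = 2 * (k + 1) by omega]; exact coeff_gs_even (k + 1)
      have h2 : PowerSeries.coeff (R := ℂ) (n - 1) gs = cHalf k := by
        rw [show n - 1 = 2 * k by omega]; exact coeff_gs_even k
      rw [h1, if_pos (by omega), if_pos (by omega), PowerSeries.coeff_derivativeFun]
      have h3 : PowerSeries.coeff (R := ℂ) (n - 2 + 1) gs = cHalf k := by
        rw [show n - 2 + 1 = 2 * k by omega]; exact coeff_gs_even k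
      rw [h3, h2]
      have hcs := cHalf_succ k
      have hn1 : ((n : ℂ) + 1) = 2 * ((k : ℂ) + 1) := by
        have : (n : ℂ) = 2 * k + 1 := by exact_mod_cast congrArg (Nat.cast (R := ℂ)) hk
        rw [this]; ring
      have hn2 : ((n - 2 : ℕ) : ℂ) + 1 = 2 * (k : ℂ) := by
        exact_mod_cast congrArg (Nat.cast (R := ℂ)) (show n - 2 + 1 = 2 * k by omega)
      rw [hn1, hn2]
      linear_combination 2 * hcs

/-- A power series satisfying the homogeneous ODE with zero constant term vanishes. -/
lemma vanish (v : Sc) (h0 : PowerSeries.coeff (R := ℂ) 0 v = 0)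
    (hode : D v + D v * Xs ^ 2 = v * Xs + v * Xs) : v = 0 := by
  ext n
  rw [map_zero]
  induction n using Nat.strong_induction_on with
  | _ n ih =>
    match n with
    | 0 => exact h0
    | (m + 1) =>
      have key := congrArg (PowerSeries.coeff (R := ℂ) m) hode
      simp only [map_add, D] at key
      rw [Xs, show v * PowerSeries.X = v * PowerSeries.X ^ 1 from by ring,
        PowerSeries.coeff_mul_X_pow', PowerSeries.coeff_derivativeFun] at key
      have hx : PowerSeries.coeff (R := ℂ) m (v * PowerSeries.X ^ 1) = 0 := by
        rw [PowerSeries.coeff_mul_X_pow']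
        rcases Nat.eq_zero_or_pos m with h | h
        · rw [if_neg (by omega)]
        · rw [if_pos (by omega)]; exact ih (m - 1) (by omega)
      have hx2 : (if 2 ≤ m then
          PowerSeries.coeff (R := ℂ) (m - 2) (PowerSeries.derivative ℂ v) else 0) = 0 := by
        split_ifs with h
        · rw [PowerSeries.coeff_derivativeFun, ih (m - 2 + 1) (by omega), zero_mul]
        · rfl
      rw [hx, hx2, add_zero, add_zero] at key
      have hne : ((m : ℂ) + 1) ≠ 0 := Nat.cast_add_one_ne_zero m
      rcases mul_eq_zero.mp key with h | h
      · exact h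
      · exact absurd h hne

/-- `g² = 1 + X²`. -/
lemma hg : gs * gs = 1 + Xs ^ 2 := by
  have h0 : PowerSeries.coeff (R := ℂ) 0 (gs * gs - (1 + Xs ^ 2)) = 0 := by
    rw [map_sub, map_add, PowerSeries.coeff_zero_eq_constantCoeff, map_mul]
    have : PowerSeries.constantCoeff (R := ℂ) gs = 1 := by
      have := coeff_gs_even 0
      rw [cHalf_zero] at this
      simpa [PowerSeries.coeff_zero_eq_constantCoeff] using this
    simp [this, Xs]
  have hDw : D (gs * gs - (1 + Xs ^ 2)) = 2 * (gs * D gs) - 2 * Xs := by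
    rw [D_sub, D_mul, D_add, D_one, D_sq]; ring
  have hode : D (gs * gs - (1 + Xs ^ 2)) + D (gs * gs - (1 + Xs ^ 2)) * Xs ^ 2 =
      (gs * gs - (1 + Xs ^ 2)) * Xs + (gs * gs - (1 + Xs ^ 2)) * Xs := by
    rw [hDw]
    linear_combination (2 * gs) * ode
  have := vanish _ h0 hode
  linear_combination this

lemma one_add_X_sq_ne : (1 + Xs ^ 2 : Sc) ≠ 0 := by
  intro h
  have := congrArg (PowerSeries.constantCoeff (R := ℂ)) h
  simp [Xs] at this

/-- `g g' = X`. -/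
lemma hgDg : gs * D gs = Xs := by
  have h1 : (1 + Xs ^ 2) * (gs * D gs) = (1 + Xs ^ 2) * Xs := by
    linear_combination gs * ode + Xs * hg
  exact mul_left_cancel₀ one_add_X_sq_ne h1

/-- `(1+X²) g'' = g - X g'`. -/
lemma hDDg : (1 + Xs ^ 2) * D (D gs) = gs - Xs * D gs := by
  have h := congrArg D ode
  rw [D_mul, D_mul, D_add, D_one, D_sq, D_X] at h
  linear_combination h

/-! #### Relations in `U` -/

lemma e_rel (i j k l : Fin 3) :
    e i j * e k l - ((-1 : ℂ) ^ (par i j * par k l)) • (e k l * e i j) =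
      (if j = k then e i l else 0)
        - ((-1 : ℂ) ^ (par i j * par k l)) • (if l = i then e k j else 0) := by
  have h := RingQuot.mkAlgHom_rel ℂ (Rel.mk i j k l)
  simpa [e, gen, map_sub, map_mul, map_smul,
    apply_ite (RingQuot.mkAlgHom ℂ Rel)] using h

lemma rel_a : e 0 0 * e 0 1 - e 0 1 * e 0 0 = e 0 1 := by
  have h := e_rel 0 0 0 1
  simpa [show par 0 0 * par 0 1 = 0 from by decide,
    show ¬ (1 : Fin 3) = 0 from by decide] using h

lemma rel_b : e 1 1 * e 0 1 - e 0 1 * e 1 1 = -(e 0 1) := by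
  have h := e_rel 1 1 0 1
  simpa [show par 1 1 * par 0 1 = 0 from by decide,
    show ¬ (1 : Fin 3) = 0 from by decide] using h

lemma rel_c : e 0 0 * e 1 0 - e 1 0 * e 0 0 = -(e 1 0) := by
  have h := e_rel 0 0 1 0
  simpa [show par 0 0 * par 1 0 = 0 from by decide,
    show ¬ (0 : Fin 3) = 1 from by decide] using h

lemma rel_d : e 1 1 * e 1 0 - e 1 0 * e 1 1 = e 1 0 := by
  have h := e_rel 1 1 1 0
  simpa [show par 1 1 * par 1 0 = 0 from by decide,
    show ¬ (0 : Fin 3) = 1 from by decide] using h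

lemma rel_e : e 0 1 * e 1 0 - e 1 0 * e 0 1 = e 0 0 - e 1 1 := by
  have h := e_rel 0 1 1 0
  simpa [show par 0 1 * par 1 0 = 0 from by decide] using h

lemma u_he : h₁ * e₁ = e₁ * h₁ + (e₁ + e₁) := by
  have ha := sub_eq_iff_eq_add.mp rel_a
  have hb := sub_eq_iff_eq_add.mp rel_b
  simp only [h₁, e₁, sub_mul, mul_sub, ha, hb]
  abel

lemma u_hf : h₁ * f₁ = f₁ * h₁ - (f₁ + f₁) := by
  have hc := sub_eq_iff_eq_add.mp rel_c
  have hd := sub_eq_iff_eq_add.mp rel_d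
  simp only [h₁, f₁, sub_mul, mul_sub, hc, hd]
  abel

lemma u_ef : e₁ * f₁ = f₁ * e₁ + h₁ := by
  have he := sub_eq_iff_eq_add.mp rel_e
  simp only [h₁, e₁, f₁, he]
  abel

lemma u_hepow (n : ℕ) :
    h₁ * e₁ ^ n = e₁ ^ n * h₁ + ((2 * n : ℂ)) • e₁ ^ n := by
  induction n with
  | zero => simp
  | succ m ih =>
    have h1 : h₁ * e₁ ^ (m + 1) = (h₁ * e₁ ^ m) * e₁ := by
      rw [pow_succ, mul_assoc]
    rw [h1, ih, add_mul, smul_mul_assoc, mul_assoc, u_he, pow_succ, mul_add, mul_add,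
      ← mul_assoc]
    push_cast
    module

lemma u_epowf (n : ℕ) :
    e₁ ^ (n + 1) * f₁ =
      f₁ * e₁ ^ (n + 1) + ((n : ℂ) + 1) • (e₁ ^ n * h₁) + (((n : ℂ) + 1) * n) • e₁ ^ n := by
  induction n with
  | zero =>
    simp [u_ef]
  | succ m ih =>
    have h1 : e₁ ^ (m + 2) * f₁ = e₁ * (e₁ ^ (m + 1) * f₁) := by
      rw [pow_succ', mul_assoc]
    rw [h1, ih, mul_add, mul_add, mul_smul_comm, mul_smul_comm, ← mul_assoc, u_ef,
      add_mul, mul_assoc f₁, ← pow_succ', ← mul_assoc, ← pow_succ', u_hepow (m + 1)]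
    push_cast
    module

/-! #### The embedding `ψ` and commutation rules in `V` -/

lemma tv_comm (a : V) : tv * a = a * tv := ((PowerSeries.commute_X a).eq).symm

lemma psi_add (p q : Sc) : ψ (p + q) = ψ p + ψ q := by
  ext n
  simp [coeff_psi, add_smul]

lemma psi_sub (p q : Sc) : ψ (p - q) = ψ p - ψ q := by
  ext n
  simp only [map_sub, coeff_psi]
  module

lemma psi_neg (p : Sc) : ψ (-p) = -(ψ p) := by
  ext n
  simp only [map_neg, coeff_psi]
  module

lemma psi_one : ψ 1 = 1 := by
  ext n
  rw [coeff_psi, PowerSeries.coeff_one, PowerSeries.coeff_one]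
  split_ifs with h
  · subst h; simp
  · simp

lemma psi_mul (p q : Sc) : ψ p * ψ q = ψ (p * q) := by
  ext n
  rw [PowerSeries.coeff_mul, coeff_psi, PowerSeries.coeff_mul, Finset.sum_smul]
  refine Finset.sum_congr rfl fun x hx => ?_
  have hxy := Finset.HasAntidiagonal.mem_antidiagonal.mp hx
  rw [coeff_psi, coeff_psi, smul_mul_assoc, mul_smul_comm, smul_smul, ← pow_add, hxy]

lemma smul_psi (c : ℂ) (q : Sc) : c • ψ q = ψ (PowerSeries.C (R := ℂ) c * q) := by
  ext n
  rw [PowerSeries.coeff_smul, coeff_psi, coeff_psi, PowerSeries.coeff_C_mul, smul_smul]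

lemma psi_X : ψ Xs = tv * C e₁ := by
  ext n
  rw [coeff_psi, tv, C]
  cases n with
  | zero =>
    rw [PowerSeries.coeff_zero_X_mul]
    simp [Xs, PowerSeries.coeff_X]
  | succ m =>
    rw [PowerSeries.coeff_succ_X_mul, PowerSeries.coeff_C, Xs, PowerSeries.coeff_X]
    rcases Nat.eq_zero_or_pos m with h | h
    · subst h; simp
    · rw [if_neg (by omega), if_neg (by omega), zero_smul]

lemma s_eq : s = ψ gs := by
  ext n
  rw [s, PowerSeries.coeff_mk, coeff_psi, coeff_gs]
  split_ifs with h
  · rfl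
  · rw [zero_smul]

lemma coeff_XD (p : Sc) (n : ℕ) :
    PowerSeries.coeff (R := ℂ) n (Xs * D p) = PowerSeries.coeff (R := ℂ) n p * n := by
  cases n with
  | zero => rw [Xs, PowerSeries.coeff_zero_X_mul]; simp
  | succ m =>
    rw [Xs, PowerSeries.coeff_succ_X_mul, D, PowerSeries.coeff_derivativeFun]
    push_cast
    ring

lemma coeff_L (p : Sc) (n : ℕ) :
    PowerSeries.coeff (R := ℂ) n (L p) = 2 * (PowerSeries.coeff (R := ℂ) n p * n) := by
  rw [L_def, two_mul, map_add, coeff_XD, two_mul]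

/-- Commutation of `C h₁` past `ψ p`. -/
lemma hcomm (p : Sc) : C h₁ * ψ p = ψ p * C h₁ + ψ (L p) := by
  ext n
  rw [map_add, C, PowerSeries.coeff_C_mul, PowerSeries.coeff_mul_C, coeff_psi, coeff_psi,
    coeff_L, mul_smul_comm, smul_mul_assoc, u_hepow n]
  push_cast
  module

/-- Commutation of `ψ p` past `C f₁`. -/
lemma fcomm (p : Sc) :
    ψ p * C f₁ = C f₁ * ψ p + tv * (ψ (D p) * C h₁) + tv * ψ (Xs * D (D p)) := by
  ext n
  rw [map_add, map_add, C, PowerSeries.coeff_mul_C, PowerSeries.coeff_C_mul, coeff_psi,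
    tv, mul_smul_comm, smul_mul_assoc]
  cases n with
  | zero =>
    rw [PowerSeries.coeff_zero_X_mul, PowerSeries.coeff_zero_X_mul]
    simp
  | succ m =>
    rw [PowerSeries.coeff_succ_X_mul, PowerSeries.coeff_succ_X_mul,
      PowerSeries.coeff_mul_C, coeff_psi, coeff_psi, coeff_XD, D,
      PowerSeries.coeff_derivativeFun, smul_mul_assoc, u_epowf m]
    push_cast
    module

lemma hfc : C h₁ * C f₁ = C f₁ * C h₁ - (C f₁ + C f₁) := by
  have h := congrArg C u_hf
  rw [map_mul, map_sub, map_mul, map_add] at h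
  exact h

/-- Double commutation of `C h₁ * C h₁` past `ψ p`. -/
lemma HHcomm (p : Sc) :
    (C h₁ * C h₁) * ψ p = ψ p * (C h₁ * C h₁) + 2 * (ψ (L p) * C h₁) + ψ (L (L p)) := by
  linear_combination (norm := noncomm_ring) C h₁ * hcomm p + hcomm p * C h₁ + hcomm (L p)

/-! #### Normal forms of the generators -/

lemma hT : T = ψ (Xs + gs) := by
  rw [T, psi_add, psi_X, s_eq]

lemma hT' : T' = ψ (gs - Xs) := by
  rw [T', psi_sub, psi_X, s_eq, neg_add_eq_sub]

lemma hH₁ : H₁ = ψ gs * C h₁ := by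
  rw [H₁, s_eq]

lemma hF₁ : F₁ = C f₁ - tv * (ψ rr * (C h₁ * C h₁)) + tv * ψ rr := by
  rw [F₁]
  have h1 : C (e₁ * (h₁ ^ 2 - 1)) = C e₁ * (C h₁ * C h₁ - 1) := by
    rw [map_mul, map_sub, map_one, map_pow, sq]
  have h2 : ((1:ℂ)/4) • (tv ^ 2 * C (e₁ * (h₁ ^ 2 - 1))) =
      tv * (ψ rr * (C h₁ * C h₁)) - tv * ψ rr := by
    rw [h1, show tv ^ 2 * (C e₁ * (C h₁ * C h₁ - 1)) =
        tv * (ψ Xs * (C h₁ * C h₁ - 1)) from by rw [psi_X]; noncomm_ring,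
      ← mul_smul_comm, ← smul_mul_assoc, smul_psi]
    have hr : ψ (PowerSeries.C (R := ℂ) (1/4) * Xs) = ψ rr := rfl
    rw [hr, mul_sub, mul_one, mul_sub]
  rw [h2]
  abel

/-! #### Structured commutators -/

lemma brHT (p : Sc) :
    (ψ gs * C h₁) * ψ p - ψ p * (ψ gs * C h₁) = ψ (gs * L p) := by
  have m₁ : ψ gs * ψ p = ψ (gs * p) := psi_mul gs p
  have m₂ : ψ p * ψ gs = ψ (gs * p) := (psi_mul p gs).trans (congrArg ψ (mul_comm p gs))
  have m₃ : ψ gs * ψ (L p) = ψ (gs * L p) := psi_mul gs (L p)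
  linear_combination (norm := noncomm_ring) ψ gs * hcomm p + (m₁ - m₂) * C h₁ + m₃

lemma acHT (p : Sc) :
    (ψ gs * C h₁) * ψ p + ψ p * (ψ gs * C h₁) = 2 * (ψ (gs * p) * C h₁) + ψ (gs * L p) := by
  have m₁ : ψ gs * ψ p = ψ (gs * p) := psi_mul gs p
  have m₂ : ψ p * ψ gs = ψ (gs * p) := (psi_mul p gs).trans (congrArg ψ (mul_comm p gs))
  have m₃ : ψ gs * ψ (L p) = ψ (gs * L p) := psi_mul gs (L p)
  linear_combination (norm := noncomm_ring) ψ gs * hcomm p + (m₁ + m₂) * C h₁ + m₃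

set_option maxHeartbeats 1600000 in
lemma psiF (p : Sc) :
    ψ p * F₁ = C f₁ * ψ p + tv * (ψ (D p) * C h₁) + tv * ψ (Xs * D (D p))
      - tv * (ψ (rr * p) * (C h₁ * C h₁)) + tv * ψ (rr * p) := by
  have mrp : ψ p * ψ rr = ψ (rr * p) := (psi_mul p rr).trans (congrArg ψ (mul_comm p rr))
  rw [hF₁]
  linear_combination (norm := noncomm_ring [neg_neg]) fcomm p
    + tv_comm (ψ p) * (ψ rr * (C h₁ * C h₁)) - tv_comm (ψ p) * ψ rr
    - tv * (mrp * (C h₁ * C h₁)) + tv * mrp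

set_option maxHeartbeats 1600000 in
lemma Fpsi (p : Sc) :
    F₁ * ψ p = C f₁ * ψ p - tv * (ψ (rr * p) * (C h₁ * C h₁))
      - 2 * (tv * (ψ (rr * L p) * C h₁)) - tv * ψ (rr * L (L p)) + tv * ψ (rr * p) := by
  have mr1 : ψ rr * ψ p = ψ (rr * p) := psi_mul rr p
  have mr2 : ψ rr * ψ (L p) = ψ (rr * L p) := psi_mul rr (L p)
  have mr3 : ψ rr * ψ (L (L p)) = ψ (rr * L (L p)) := psi_mul rr (L (L p))
  rw [hF₁]
  linear_combination (norm := noncomm_ring [neg_neg]) (-(tv * ψ rr)) * HHcomm p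
    - tv * (mr1 * (C h₁ * C h₁)) - 2 * (tv * (mr2 * C h₁)) - tv * mr3 + tv * mr1

/-! #### Scalar expansions -/

lemma hDgp : D (Xs + gs) = 1 + D gs := by rw [D_add, D_X]

lemma hDgm : D (gs - Xs) = D gs - 1 := by rw [D_sub, D_X]

lemma hDDgp : D (D (Xs + gs)) = D (D gs) := by
  rw [hDgp, D_add, D_one, zero_add]

lemma hDDgm : D (D (gs - Xs)) = D (D gs) := by
  rw [hDgm, D_sub, D_one, sub_zero]

lemma hLgp : L (Xs + gs) = 2 * (Xs * (1 + D gs)) := by rw [L_def, hDgp]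

lemma hLgm : L (gs - Xs) = 2 * (Xs * (D gs - 1)) := by rw [L_def, hDgm]

lemma hLLgp : L (L (Xs + gs)) = 2 * (Xs * (2 * (Xs * D (D gs) + (1 + D gs)))) := by
  rw [L_def (L (Xs + gs)), hLgp, D_two_mul, D_X_mul, D_add, D_one, zero_add]

lemma hLLgm : L (L (gs - Xs)) = 2 * (Xs * (2 * (Xs * D (D gs) + (D gs - 1)))) := by
  rw [L_def (L (gs - Xs)), hLgm, D_two_mul, D_X_mul, D_sub, D_one, sub_zero]

lemma hLLg : L (L gs) = 2 * (Xs * (2 * (Xs * D (D gs) + D gs))) := by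
  rw [L_def (L gs), L_def gs, D_two_mul, D_X_mul]

lemma hLr : L rr = 2 * (Xs * PowerSeries.C (R := ℂ) (1/4)) := by
  rw [L_def, rr, D_C_mul, D_X, mul_one]

/-! #### Auxiliary smul helpers -/

lemma two_mul_eq_smul (w : V) : 2 * w = (2 : ℂ) • w := by
  rw [Algebra.smul_def, map_ofNat]

lemma half_two (w : V) : ((1 : ℂ)/2) • (2 * w) = w := by
  rw [two_mul_eq_smul, smul_smul]
  norm_num

/-! #### Statements 1 and 2 -/

lemma st1 : T * T' = 1 := by
  rw [hT, hT', psi_mul, show (Xs + gs) * (gs - Xs) = 1 from by linear_combination hg]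
  exact psi_one

lemma st2 : T' * T = 1 := by
  rw [hT', hT, psi_mul, show (gs - Xs) * (Xs + gs) = 1 from by linear_combination hg]
  exact psi_one

/-! #### Statements 3 and 4 -/

lemma st3 : br H₁ T = T ^ 2 - 1 := by
  rw [br, sq, hH₁, hT, brHT, psi_mul, ← psi_one, ← psi_sub]
  refine congrArg ψ ?_
  rw [hLgp]
  linear_combination 2 * Xs * hgDg - hg

lemma st4 : br H₁ T' = T' ^ 2 - 1 := by
  rw [br, sq, hH₁, hT', brHT, psi_mul, ← psi_one, ← psi_sub]
  refine congrArg ψ ?_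
  rw [hLgm]
  linear_combination 2 * Xs * hgDg - hg

/-! #### Statement 5 -/

lemma e5H : ψ (gs * (Xs + gs)) =
    ψ (D (Xs + gs)) + (ψ (rr * L (Xs + gs)) + ψ (rr * L (Xs + gs))) := by
  simp only [← psi_add]
  refine congrArg ψ ?_
  rw [hDgp, hLgp, rr]
  linear_combination hg - ode - (Xs ^ 2 + Xs ^ 2 * D gs) * hc4

lemma e51 : ψ (gs * L (Xs + gs)) =
    (ψ (Xs * D (D (Xs + gs))) + ψ (Xs * D (D (Xs + gs))))
      + (ψ (rr * L (L (Xs + gs))) + ψ (rr * L (L (Xs + gs)))) := by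
  simp only [← psi_add]
  refine congrArg ψ ?_
  rw [hDDgp, hLLgp, hLgp, rr]
  linear_combination 2 * Xs * hgDg - 2 * Xs * hDDg
    - (2 * Xs ^ 3 * D (D gs) + 2 * Xs ^ 2 + 2 * Xs ^ 2 * D gs) * hc4

set_option maxHeartbeats 1600000 in
lemma key5 : tv * (H₁ * T + T * H₁) = 2 * br T F₁ := by
  rw [br, hH₁, hT]
  linear_combination (norm := noncomm_ring) tv * acHT (Xs + gs)
    + 2 * (tv * (e5H * C h₁)) + tv * e51
    - 2 * psiF (Xs + gs) + 2 * Fpsi (Xs + gs)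

lemma st5 : br T F₁ = ((1 : ℂ)/2) • (tv * (H₁ * T + T * H₁)) := by
  rw [key5]
  exact (half_two _).symm

/-! #### Statement 6 -/

lemma e6H : ψ (gs * (gs - Xs)) =
    -(ψ (D (gs - Xs))) - (ψ (rr * L (gs - Xs)) + ψ (rr * L (gs - Xs))) := by
  simp only [← psi_add, ← psi_neg, ← psi_sub]
  refine congrArg ψ ?_
  rw [hDgm, hLgm, rr]
  linear_combination hg + ode + (Xs ^ 2 * D gs - Xs ^ 2) * hc4

lemma e61 : ψ (gs * L (gs - Xs)) =
    -(ψ (Xs * D (D (gs - Xs))) + ψ (Xs * D (D (gs - Xs))))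
      - (ψ (rr * L (L (gs - Xs))) + ψ (rr * L (L (gs - Xs)))) := by
  simp only [← psi_add, ← psi_neg, ← psi_sub]
  refine congrArg ψ ?_
  rw [hDDgm, hLLgm, hLgm, rr]
  linear_combination 2 * Xs * hgDg + 2 * Xs * hDDg
    + (2 * Xs ^ 3 * D (D gs) + 2 * Xs ^ 2 * D gs - 2 * Xs ^ 2) * hc4

set_option maxHeartbeats 1600000 in
lemma key6 : tv * (H₁ * T' + T' * H₁) = -(2 * br T' F₁) := by
  rw [br, hH₁, hT']
  linear_combination (norm := noncomm_ring [neg_neg]) tv * acHT (gs - Xs)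
    + 2 * (tv * (e6H * C h₁)) + tv * e61
    + 2 * psiF (gs - Xs) - 2 * Fpsi (gs - Xs)

lemma st6 : br T' F₁ = -(((1 : ℂ)/2) • (tv * (H₁ * T' + T' * H₁))) := by
  rw [key6, smul_neg, half_two, neg_neg]

/-! #### Statement 7 -/

set_option maxHeartbeats 1600000 in
lemma lhs7 : br H₁ F₁ =
    -(2 * (C f₁ * ψ gs))
      + tv * (ψ (D gs) * (C h₁ * C h₁))
      - tv * (ψ (gs * L rr) * (C h₁ * C h₁))
      + 2 * (tv * (ψ (rr * L gs) * (C h₁ * C h₁)))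
      + tv * (ψ (Xs * D (D gs)) * C h₁)
      + tv * (ψ (rr * L (L gs)) * C h₁)
      - 2 * (tv * (ψ (D gs) * C h₁))
      - 2 * (tv * ψ (Xs * D (D gs)))
      + tv * ψ (gs * L rr) := by
  have mgr : ψ gs * ψ rr = ψ (gs * rr) := psi_mul gs rr
  have mrg : ψ rr * ψ gs = ψ (gs * rr) :=
    (psi_mul rr gs).trans (congrArg ψ (mul_comm rr gs))
  have mgLr : ψ gs * ψ (L rr) = ψ (gs * L rr) := psi_mul gs (L rr)
  have mrLg : ψ rr * ψ (L gs) = ψ (rr * L gs) := psi_mul rr (L gs)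
  have mrLLg : ψ rr * ψ (L (L gs)) = ψ (rr * L (L gs)) := psi_mul rr (L (L gs))
  rw [br, hH₁, hF₁]
  linear_combination (norm := noncomm_ring [neg_neg]) ψ gs * hfc + fcomm gs * C h₁ - 2 * fcomm gs
    + tv_comm (ψ gs * C h₁) * (ψ rr * (C h₁ * C h₁)) - tv_comm (ψ gs * C h₁) * ψ rr
    - tv * ((ψ gs * hcomm rr) * (C h₁ * C h₁))
    + tv * (ψ gs * hcomm rr)
    - tv * (mgr * (C h₁ * C h₁ * C h₁)) + tv * (mgr * C h₁)
    - tv * (mgLr * (C h₁ * C h₁)) + tv * mgLr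
    + tv * ((ψ rr * HHcomm gs) * C h₁)
    + tv * (mrg * (C h₁ * C h₁ * C h₁)) - tv * (mrg * C h₁)
    + 2 * (tv * (mrLg * (C h₁ * C h₁)))
    + tv * (mrLLg * C h₁)

lemma w0 : ψ (Xs + gs) + ψ (gs - Xs) = ψ gs + ψ gs := by
  simp only [← psi_add]
  exact congrArg ψ (by ring)

lemma wHH : ψ (rr * (Xs + gs)) + ψ (rr * (gs - Xs)) =
    ψ (D gs) - ψ (gs * L rr) + (ψ (rr * L gs) + ψ (rr * L gs)) := by
  simp only [← psi_add, ← psi_sub]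
  refine congrArg ψ ?_
  rw [hLr, L_def gs, rr]
  linear_combination -ode + (Xs * gs - Xs ^ 2 * D gs) * hc4

lemma wH : ψ (D (Xs + gs)) + ψ (D (gs - Xs))
      - (ψ (rr * L (Xs + gs)) + ψ (rr * L (Xs + gs)))
      - (ψ (rr * L (gs - Xs)) + ψ (rr * L (gs - Xs))) =
    -(ψ (Xs * D (D gs)) + ψ (Xs * D (D gs)) + ψ (rr * L (L gs)) + ψ (rr * L (L gs)))
      + (ψ (D gs) + ψ (D gs) + ψ (D gs) + ψ (D gs)) := by
  simp only [← psi_add, ← psi_sub, ← psi_neg]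
  refine congrArg ψ ?_
  rw [hDgp, hDgm, hLgp, hLgm, hLLg, rr]
  linear_combination 2 * Xs * hDDg - 2 * ode + (2 * Xs ^ 3 * D (D gs)) * hc4

lemma w1 : ψ (Xs * D (D (Xs + gs))) + ψ (Xs * D (D (gs - Xs)))
      + (ψ (rr * (Xs + gs)) + ψ (rr * (Xs + gs)))
      + (ψ (rr * (gs - Xs)) + ψ (rr * (gs - Xs)))
      - ψ (rr * L (L (Xs + gs))) - ψ (rr * L (L (gs - Xs))) =
    (ψ (Xs * D (D gs)) + ψ (Xs * D (D gs)) + ψ (Xs * D (D gs)) + ψ (Xs * D (D gs)))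
      - (ψ (gs * L rr) + ψ (gs * L rr)) := by
  simp only [← psi_add, ← psi_sub]
  refine congrArg ψ ?_
  rw [hDDgp, hDDgm, hLLgp, hLLgm, hLr, rr]
  linear_combination -(2 * Xs) * hDDg
    + (2 * Xs * gs - 2 * Xs ^ 3 * D (D gs) - 2 * Xs ^ 2 * D gs) * hc4

set_option maxHeartbeats 1600000 in
lemma key7 : T * F₁ + F₁ * T + T' * F₁ + F₁ * T' = -(2 * br H₁ F₁) := by
  rw [hT, hT', lhs7]
  linear_combination (norm := noncomm_ring [neg_neg]) psiF (Xs + gs) + Fpsi (Xs + gs)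
    + psiF (gs - Xs) + Fpsi (gs - Xs)
    + 2 * (C f₁ * w0)
    - 2 * (tv * (wHH * (C h₁ * C h₁)))
    + tv * (wH * C h₁) + tv * w1

lemma st7 : br H₁ F₁ = -(((1 : ℂ)/2) • (T * F₁ + F₁ * T + T' * F₁ + F₁ * T')) := by
  rw [key7, smul_neg, half_two, neg_neg]


/-- Ohn-type relations of `T`, `T'`, `H₁`, `F₁` in `U(gl(2|1))[[t]]`. -/
theorem statement0 :
    T * T' = 1 ∧ T' * T = 1 ∧
    br H₁ T = T ^ 2 - 1 ∧
    br H₁ T' = T' ^ 2 - 1 ∧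
    br T F₁ = ((1 : ℂ) / 2) • (tv * (H₁ * T + T * H₁)) ∧
    br T' F₁ = -(((1 : ℂ) / 2) • (tv * (H₁ * T' + T' * H₁))) ∧
    br H₁ F₁ = -(((1 : ℂ) / 2) • (T * F₁ + F₁ * T + T' * F₁ + F₁ * T')) := by
  exact ⟨st1, st2, st3, st4, st5, st6, st7⟩

end SuperJordanian
end
end

section
/- In U(gl(2|1))[[t]] the deformed odd generators satisfy the anticommutation relations: {E₂, F₂} = H₂ − (1/16)(T − T')² − (t/4)(T − T')E₃F₂, and {E₃, F₃} = H₃ + (1/16)(T − T')² + (t/4)(T − T')F₂E₃. -/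
noncomputable section

namespace SuperJordanian

open scoped BigOperators

/-! ### Auxiliary lemmas -/

lemma erel (i j k l : Fin 3) :
    e i j * e k l - ((-1:ℂ)^(par i j * par k l)) • (e k l * e i j)
      = (if j = k then e i l else 0)
          - ((-1:ℂ)^(par i j * par k l)) • (if l = i then e k j else 0) := by
  have h := RingQuot.mkAlgHom_rel ℂ (Rel.mk i j k l)
  simpa [e, map_sub, map_smul, map_mul, apply_ite (RingQuot.mkAlgHom ℂ Rel)] using h

lemma ac_e2_f2 : e₂ * f₂ + f₂ * e₂ = h₂ := by
  have h := erel 1 2 2 1; simp only [par, show ((0:Fin 3) = 2) = False by decide,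
    show ((2:Fin 3) = 2) = True by decide,
    show ((1:Fin 3) = 2) = False by decide, show ((2:Fin 3) ≠ 2) = False by decide,
    show ((0:Fin 3) ≠ 2) = True by decide, show ((1:Fin 3) ≠ 2) = True by decide,
    show ((0:Fin 3) ≠ 0) = False by decide, show ((0:Fin 3) = 0) = True by decide,
    show ((1:Fin 3) = 0) = False by decide, show ((0:Fin 3) = 1) = False by decide,
    show ((1:Fin 3) = 1) = True by decide, show ((2:Fin 3) = 0) = False by decide,
    show ((0:Fin 3) ≠ 1) = True by decide, show ((2:Fin 3) = 1) = False by decide,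
    show ((2:Fin 3) ≠ 0) = True by decide, show ((2:Fin 3) ≠ 1) = True by decide,
    if_true, if_false, true_and, and_true, false_and, and_false, or_true, true_or,
    false_or, or_false,
    mul_one, mul_zero, zero_mul, pow_zero, pow_one, sub_zero, smul_zero, zero_sub] at h
  try simp only [neg_one_smul, sub_neg_eq_add] at h
  rw [sub_eq_iff_eq_add] at h
  unfold e₂ f₂ h₂
  rw [h]; module

lemma ac_e3_f2 : e₃ * f₂ + f₂ * e₃ = e₁ := by
  have h := erel 0 2 2 1; simp only [par, show ((0:Fin 3) = 2) = False by decide,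
    show ((2:Fin 3) = 2) = True by decide,
    show ((1:Fin 3) = 2) = False by decide, show ((2:Fin 3) ≠ 2) = False by decide,
    show ((0:Fin 3) ≠ 2) = True by decide, show ((1:Fin 3) ≠ 2) = True by decide,
    show ((0:Fin 3) ≠ 0) = False by decide, show ((0:Fin 3) = 0) = True by decide,
    show ((1:Fin 3) = 0) = False by decide, show ((0:Fin 3) = 1) = False by decide,
    show ((1:Fin 3) = 1) = True by decide, show ((2:Fin 3) = 0) = False by decide,
    show ((0:Fin 3) ≠ 1) = True by decide, show ((2:Fin 3) = 1) = False by decide,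
    show ((2:Fin 3) ≠ 0) = True by decide, show ((2:Fin 3) ≠ 1) = True by decide,
    if_true, if_false, true_and, and_true, false_and, and_false, or_true, true_or,
    false_or, or_false,
    mul_one, mul_zero, zero_mul, pow_zero, pow_one, sub_zero, smul_zero, zero_sub] at h
  try simp only [neg_one_smul, sub_neg_eq_add] at h
  rw [sub_eq_iff_eq_add] at h
  unfold e₃ f₂ e₁
  rw [h]; module

lemma ac_e3_f3 : e₃ * f₃ + f₃ * e₃ = h₃ := by
  have h := erel 0 2 2 0; simp only [par, show ((0:Fin 3) = 2) = False by decide,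
    show ((2:Fin 3) = 2) = True by decide,
    show ((1:Fin 3) = 2) = False by decide, show ((2:Fin 3) ≠ 2) = False by decide,
    show ((0:Fin 3) ≠ 2) = True by decide, show ((1:Fin 3) ≠ 2) = True by decide,
    show ((0:Fin 3) ≠ 0) = False by decide, show ((0:Fin 3) = 0) = True by decide,
    show ((1:Fin 3) = 0) = False by decide, show ((0:Fin 3) = 1) = False by decide,
    show ((1:Fin 3) = 1) = True by decide, show ((2:Fin 3) = 0) = False by decide,
    show ((0:Fin 3) ≠ 1) = True by decide, show ((2:Fin 3) = 1) = False by decide,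
    show ((2:Fin 3) ≠ 0) = True by decide, show ((2:Fin 3) ≠ 1) = True by decide,
    if_true, if_false, true_and, and_true, false_and, and_false, or_true, true_or,
    false_or, or_false,
    mul_one, mul_zero, zero_mul, pow_zero, pow_one, sub_zero, smul_zero, zero_sub] at h
  try simp only [neg_one_smul, sub_neg_eq_add] at h
  rw [sub_eq_iff_eq_add] at h
  show e₃ * f₃ + f₃ * e₃ = h₁ + h₂
  unfold e₃ f₃ h₁ h₂
  rw [h]; module

lemma comm_e1_f2 : e₁ * f₂ = f₂ * e₁ := by
  have h := erel 0 1 2 1; simp only [par, show ((0:Fin 3) = 2) = False by decide,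
    show ((2:Fin 3) = 2) = True by decide,
    show ((1:Fin 3) = 2) = False by decide, show ((2:Fin 3) ≠ 2) = False by decide,
    show ((0:Fin 3) ≠ 2) = True by decide, show ((1:Fin 3) ≠ 2) = True by decide,
    show ((0:Fin 3) ≠ 0) = False by decide, show ((0:Fin 3) = 0) = True by decide,
    show ((1:Fin 3) = 0) = False by decide, show ((0:Fin 3) = 1) = False by decide,
    show ((1:Fin 3) = 1) = True by decide, show ((2:Fin 3) = 0) = False by decide,
    show ((0:Fin 3) ≠ 1) = True by decide, show ((2:Fin 3) = 1) = False by decide,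
    show ((2:Fin 3) ≠ 0) = True by decide, show ((2:Fin 3) ≠ 1) = True by decide,
    if_true, if_false, true_and, and_true, false_and, and_false, or_true, true_or,
    false_or, or_false,
    mul_one, mul_zero, zero_mul, pow_zero, pow_one, sub_zero, smul_zero, zero_sub] at h
  try simp only [neg_one_smul, sub_neg_eq_add] at h
  rw [sub_eq_iff_eq_add] at h
  unfold e₁ f₂
  rw [h]; module

lemma comm_e3_e1 : e₃ * e₁ = e₁ * e₃ := by
  have h := erel 0 2 0 1; simp only [par, show ((0:Fin 3) = 2) = False by decide,
    show ((2:Fin 3) = 2) = True by decide,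
    show ((1:Fin 3) = 2) = False by decide, show ((2:Fin 3) ≠ 2) = False by decide,
    show ((0:Fin 3) ≠ 2) = True by decide, show ((1:Fin 3) ≠ 2) = True by decide,
    show ((0:Fin 3) ≠ 0) = False by decide, show ((0:Fin 3) = 0) = True by decide,
    show ((1:Fin 3) = 0) = False by decide, show ((0:Fin 3) = 1) = False by decide,
    show ((1:Fin 3) = 1) = True by decide, show ((2:Fin 3) = 0) = False by decide,
    show ((0:Fin 3) ≠ 1) = True by decide, show ((2:Fin 3) = 1) = False by decide,
    show ((2:Fin 3) ≠ 0) = True by decide, show ((2:Fin 3) ≠ 1) = True by decide,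
    if_true, if_false, true_and, and_true, false_and, and_false, or_true, true_or,
    false_or, or_false,
    mul_one, mul_zero, zero_mul, pow_zero, pow_one, sub_zero, smul_zero, zero_sub] at h
  try simp only [neg_one_smul, sub_neg_eq_add] at h
  rw [sub_eq_iff_eq_add] at h
  unfold e₃ e₁
  rw [h]; module

lemma h1_f2 : h₁ * f₂ = f₂ * h₁ + f₂ := by
  have ha := erel 0 0 2 1; simp only [par, show ((0:Fin 3) = 2) = False by decide,
    show ((2:Fin 3) = 2) = True by decide,
    show ((1:Fin 3) = 2) = False by decide, show ((2:Fin 3) ≠ 2) = False by decide,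
    show ((0:Fin 3) ≠ 2) = True by decide, show ((1:Fin 3) ≠ 2) = True by decide,
    show ((0:Fin 3) ≠ 0) = False by decide, show ((0:Fin 3) = 0) = True by decide,
    show ((1:Fin 3) = 0) = False by decide, show ((0:Fin 3) = 1) = False by decide,
    show ((1:Fin 3) = 1) = True by decide, show ((2:Fin 3) = 0) = False by decide,
    show ((0:Fin 3) ≠ 1) = True by decide, show ((2:Fin 3) = 1) = False by decide,
    show ((2:Fin 3) ≠ 0) = True by decide, show ((2:Fin 3) ≠ 1) = True by decide,
    if_true, if_false, true_and, and_true, false_and, and_false, or_true, true_or,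
    false_or, or_false,
    mul_one, mul_zero, zero_mul, pow_zero, pow_one, sub_zero, smul_zero, zero_sub] at ha
  try simp only [neg_one_smul, sub_neg_eq_add] at ha
  have hb := erel 1 1 2 1; simp only [par, show ((0:Fin 3) = 2) = False by decide,
    show ((2:Fin 3) = 2) = True by decide,
    show ((1:Fin 3) = 2) = False by decide, show ((2:Fin 3) ≠ 2) = False by decide,
    show ((0:Fin 3) ≠ 2) = True by decide, show ((1:Fin 3) ≠ 2) = True by decide,
    show ((0:Fin 3) ≠ 0) = False by decide, show ((0:Fin 3) = 0) = True by decide,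
    show ((1:Fin 3) = 0) = False by decide, show ((0:Fin 3) = 1) = False by decide,
    show ((1:Fin 3) = 1) = True by decide, show ((2:Fin 3) = 0) = False by decide,
    show ((0:Fin 3) ≠ 1) = True by decide, show ((2:Fin 3) = 1) = False by decide,
    show ((2:Fin 3) ≠ 0) = True by decide, show ((2:Fin 3) ≠ 1) = True by decide,
    if_true, if_false, true_and, and_true, false_and, and_false, or_true, true_or,
    false_or, or_false,
    mul_one, mul_zero, zero_mul, pow_zero, pow_one, sub_zero, smul_zero, zero_sub] at hb
  try simp only [neg_one_smul, sub_neg_eq_add] at hb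
  rw [sub_eq_iff_eq_add] at ha hb
  unfold h₁ f₂
  rw [sub_mul, mul_sub, ha, hb]
  module

lemma h1_e3 : h₁ * e₃ = e₃ * h₁ + e₃ := by
  have ha := erel 0 0 0 2; simp only [par, show ((0:Fin 3) = 2) = False by decide,
    show ((2:Fin 3) = 2) = True by decide,
    show ((1:Fin 3) = 2) = False by decide, show ((2:Fin 3) ≠ 2) = False by decide,
    show ((0:Fin 3) ≠ 2) = True by decide, show ((1:Fin 3) ≠ 2) = True by decide,
    show ((0:Fin 3) ≠ 0) = False by decide, show ((0:Fin 3) = 0) = True by decide,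
    show ((1:Fin 3) = 0) = False by decide, show ((0:Fin 3) = 1) = False by decide,
    show ((1:Fin 3) = 1) = True by decide, show ((2:Fin 3) = 0) = False by decide,
    show ((0:Fin 3) ≠ 1) = True by decide, show ((2:Fin 3) = 1) = False by decide,
    show ((2:Fin 3) ≠ 0) = True by decide, show ((2:Fin 3) ≠ 1) = True by decide,
    if_true, if_false, true_and, and_true, false_and, and_false, or_true, true_or,
    false_or, or_false,
    mul_one, mul_zero, zero_mul, pow_zero, pow_one, sub_zero, smul_zero, zero_sub] at ha
  try simp only [neg_one_smul, sub_neg_eq_add] at ha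
  have hb := erel 1 1 0 2; simp only [par, show ((0:Fin 3) = 2) = False by decide,
    show ((2:Fin 3) = 2) = True by decide,
    show ((1:Fin 3) = 2) = False by decide, show ((2:Fin 3) ≠ 2) = False by decide,
    show ((0:Fin 3) ≠ 2) = True by decide, show ((1:Fin 3) ≠ 2) = True by decide,
    show ((0:Fin 3) ≠ 0) = False by decide, show ((0:Fin 3) = 0) = True by decide,
    show ((1:Fin 3) = 0) = False by decide, show ((0:Fin 3) = 1) = False by decide,
    show ((1:Fin 3) = 1) = True by decide, show ((2:Fin 3) = 0) = False by decide,
    show ((0:Fin 3) ≠ 1) = True by decide, show ((2:Fin 3) = 1) = False by decide,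
    show ((2:Fin 3) ≠ 0) = True by decide, show ((2:Fin 3) ≠ 1) = True by decide,
    if_true, if_false, true_and, and_true, false_and, and_false, or_true, true_or,
    false_or, or_false,
    mul_one, mul_zero, zero_mul, pow_zero, pow_one, sub_zero, smul_zero, zero_sub] at hb
  try simp only [neg_one_smul, sub_neg_eq_add] at hb
  rw [sub_eq_iff_eq_add] at ha hb
  unfold h₁ e₃
  rw [sub_mul, mul_sub, ha, hb]
  module

lemma idb2 : e₁ * e₃ * (2 * h₁ + 1) * f₂ + f₂ * (e₁ * e₃ * (2 * h₁ + 1))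
    = (e₁ ^ 2 * h₁ + e₁ ^ 2 * h₁) + e₁ ^ 2 + (e₁ * e₃ * f₂ + e₁ * e₃ * f₂) := by
  have hA : (2 * h₁ + 1) * f₂ - f₂ * (2 * h₁ + 3) = 0 := by
    have := h1_f2; noncomm_ring [this]
  have hB : f₂ * e₁ - e₁ * f₂ = 0 := by rw [comm_e1_f2, sub_self]
  have hD : e₃ * f₂ - (e₁ - f₂ * e₃) = 0 := by
    rw [sub_eq_zero, ← ac_e3_f2]; noncomm_ring
  have key : e₁ * e₃ * (2 * h₁ + 1) * f₂ + f₂ * (e₁ * e₃ * (2 * h₁ + 1))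
      = ((e₁ ^ 2 * h₁ + e₁ ^ 2 * h₁) + e₁ ^ 2 + (e₁ * e₃ * f₂ + e₁ * e₃ * f₂))
        + (e₁ * e₃ * ((2 * h₁ + 1) * f₂ - f₂ * (2 * h₁ + 3))
          + (f₂ * e₁ - e₁ * f₂) * (e₃ * (2 * h₁ + 1))
          + e₁ * (e₃ * f₂ - (e₁ - f₂ * e₃)) * (2 * h₁ + 1)) := by
    simp only [show (2:U) = 1+1 from by norm_num, show (3:U) = 1+1+1 from by norm_num,
      add_mul, mul_add, sub_mul, mul_sub, mul_assoc, one_mul, mul_one, pow_two]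
    abel
  rw [key, hA, hB, hD]
  noncomm_ring

lemma idb3 : e₃ * (e₁ * f₂ * (2 * h₁ + 1)) + e₁ * f₂ * (2 * h₁ + 1) * e₃
    = (e₁ ^ 2 * h₁ + e₁ ^ 2 * h₁) + e₁ ^ 2 + (e₁ * f₂ * e₃ + e₁ * f₂ * e₃) := by
  have hA : (2 * h₁ + 1) * e₃ - e₃ * (2 * h₁ + 3) = 0 := by
    have := h1_e3; noncomm_ring [this]
  have hB : e₃ * e₁ - e₁ * e₃ = 0 := by rw [comm_e3_e1, sub_self]
  have hD : e₃ * f₂ - (e₁ - f₂ * e₃) = 0 := by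
    rw [sub_eq_zero, ← ac_e3_f2]; noncomm_ring
  have key : e₃ * (e₁ * f₂ * (2 * h₁ + 1)) + e₁ * f₂ * (2 * h₁ + 1) * e₃
      = ((e₁ ^ 2 * h₁ + e₁ ^ 2 * h₁) + e₁ ^ 2 + (e₁ * f₂ * e₃ + e₁ * f₂ * e₃))
        + ((e₃ * e₁ - e₁ * e₃) * (f₂ * (2 * h₁ + 1))
          + e₁ * f₂ * ((2 * h₁ + 1) * e₃ - e₃ * (2 * h₁ + 3))
          + e₁ * (e₃ * f₂ - (e₁ - f₂ * e₃)) * (2 * h₁ + 1)) := by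
    simp only [show (2:U) = 1+1 from by norm_num, show (3:U) = 1+1+1 from by norm_num,
      add_mul, mul_add, sub_mul, mul_sub, mul_assoc, one_mul, mul_one, pow_two]
    abel
  rw [key, hA, hB, hD]
  noncomm_ring

/-! ### Power series manipulation lemmas -/

lemma Ctv (y : U) : C y * tv = tv * C y := PowerSeries.commute_X (C y)

lemma tv2C (x y : U) : tv ^ 2 * C x * C y = tv ^ 2 * C (x * y) := by
  rw [mul_assoc, ← map_mul]

lemma Ctv2 (x y : U) : C y * (tv ^ 2 * C x) = tv ^ 2 * C (y * x) := by
  calc C y * (tv ^ 2 * C x) = ((C y * tv) * tv) * C x := by noncomm_ring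
    _ = ((tv * C y) * tv) * C x := by rw [Ctv]
    _ = (tv * (C y * tv)) * C x := by rw [mul_assoc tv (C y) tv]
    _ = (tv * (tv * C y)) * C x := by rw [Ctv]
    _ = tv ^ 2 * C (y * x) := by rw [map_mul, pow_two tv]; noncomm_ring

lemma sq_tvCe1 : (tv * C e₁) * (tv * C e₁) = tv ^ 2 * C (e₁ ^ 2) := by
  calc (tv * C e₁) * (tv * C e₁) = tv * ((C e₁ * tv) * C e₁) := by noncomm_ring
    _ = tv * ((tv * C e₁) * C e₁) := by rw [Ctv]
    _ = tv ^ 2 * C (e₁ ^ 2) := by rw [pow_two e₁, map_mul, pow_two tv]; noncomm_ring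

lemma hTT : T - T' = (2:ℂ) • (tv * C e₁) := by
  unfold T T'; rw [two_smul]; abel

lemma tv_triple (u v : U) : tv * (tv * C e₁ * C u * C v) = tv ^ 2 * C (e₁ * u * v) := by
  rw [map_mul, map_mul]; noncomm_ring

/-! ### Main computations -/

lemma stmt1 : ac E₂ F₂ = H₂ - ((1 : ℂ) / 16) • (T - T') ^ 2
    - ((1 : ℂ) / 4) • (tv * ((T - T') * E₃ * F₂)) := by
  have L1 : ac E₂ F₂
      = (C (e₂ * f₂) + C (f₂ * e₂))
        - ((1:ℂ)/4) • (tv ^ 2 * C (e₁ * e₃ * (2 * h₁ + 1) * f₂))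
        - ((1:ℂ)/4) • (tv ^ 2 * C (f₂ * (e₁ * e₃ * (2 * h₁ + 1)))) := by
    show E₂ * F₂ + F₂ * E₂ = _
    unfold E₂ F₂
    rw [sub_mul, mul_sub, smul_mul_assoc, mul_smul_comm, tv2C, Ctv2,
      ← map_mul, ← map_mul]
    simp only [sub_eq_add_neg, ← neg_smul]; module
  have hU1 : C (e₂ * f₂) + C (f₂ * e₂) = C h₂ := by
    rw [← map_add, ac_e2_f2]
  have h2 : C (e₁ * e₃ * (2 * h₁ + 1) * f₂) + C (f₂ * (e₁ * e₃ * (2 * h₁ + 1)))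
      = C (e₁ ^ 2 * h₁) + C (e₁ ^ 2 * h₁) + C (e₁ ^ 2)
        + (C (e₁ * e₃ * f₂) + C (e₁ * e₃ * f₂)) := by
    rw [← map_add, idb2]; simp only [map_add]
  have key : ((1:ℂ)/4) • (tv ^ 2 * C (e₁ * e₃ * (2 * h₁ + 1) * f₂))
        + ((1:ℂ)/4) • (tv ^ 2 * C (f₂ * (e₁ * e₃ * (2 * h₁ + 1))))
      = ((1:ℂ)/2) • (tv ^ 2 * C (e₁ ^ 2 * h₁))
        + (((1:ℂ)/4) • (tv ^ 2 * C (e₁ ^ 2))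
          + ((1:ℂ)/2) • (tv ^ 2 * C (e₁ * e₃ * f₂))) := by
    calc ((1:ℂ)/4) • (tv ^ 2 * C (e₁ * e₃ * (2 * h₁ + 1) * f₂))
          + ((1:ℂ)/4) • (tv ^ 2 * C (f₂ * (e₁ * e₃ * (2 * h₁ + 1))))
        = ((1:ℂ)/4) • (tv ^ 2 * (C (e₁ * e₃ * (2 * h₁ + 1) * f₂)
            + C (f₂ * (e₁ * e₃ * (2 * h₁ + 1))))) := by
          rw [mul_add (tv ^ 2) (C (e₁ * e₃ * (2 * h₁ + 1) * f₂))
            (C (f₂ * (e₁ * e₃ * (2 * h₁ + 1))))]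
          module
      _ = _ := by rw [h2]; simp only [mul_add]; module
  have R1 : H₂ - ((1 : ℂ) / 16) • (T - T') ^ 2
      - ((1 : ℂ) / 4) • (tv * ((T - T') * E₃ * F₂))
      = C h₂ - ((1:ℂ)/2) • (tv ^ 2 * C (e₁ ^ 2 * h₁))
        - ((1:ℂ)/4) • (tv ^ 2 * C (e₁ ^ 2))
        - ((1:ℂ)/2) • (tv ^ 2 * C (e₁ * e₃ * f₂)) := by
    unfold H₂ E₃ F₂
    rw [hTT, smul_pow, pow_two (tv * C e₁), sq_tvCe1,
      smul_mul_assoc, smul_mul_assoc, mul_smul_comm, tv_triple]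
    simp only [sub_eq_add_neg, ← neg_smul]; module
  rw [L1, hU1, sub_sub, key, R1]
  simp only [sub_eq_add_neg, ← neg_smul]; module

lemma stmt2 : ac E₃ F₃ = H₃ + ((1 : ℂ) / 16) • (T - T') ^ 2
    + ((1 : ℂ) / 4) • (tv * ((T - T') * F₂ * E₃)) := by
  have L1 : ac E₃ F₃
      = (C (e₃ * f₃) + C (f₃ * e₃))
        + ((1:ℂ)/4) • (tv ^ 2 * C (e₃ * (e₁ * f₂ * (2 * h₁ + 1))))
        + ((1:ℂ)/4) • (tv ^ 2 * C (e₁ * f₂ * (2 * h₁ + 1) * e₃)) := by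
    show E₃ * F₃ + F₃ * E₃ = _
    unfold E₃ F₃
    rw [mul_add, add_mul, smul_mul_assoc, mul_smul_comm, tv2C, Ctv2,
      ← map_mul, ← map_mul]
    module
  have hU1 : C (e₃ * f₃) + C (f₃ * e₃) = C h₃ := by
    rw [← map_add, ac_e3_f3]
  have h2 : C (e₃ * (e₁ * f₂ * (2 * h₁ + 1))) + C (e₁ * f₂ * (2 * h₁ + 1) * e₃)
      = C (e₁ ^ 2 * h₁) + C (e₁ ^ 2 * h₁) + C (e₁ ^ 2)
        + (C (e₁ * f₂ * e₃) + C (e₁ * f₂ * e₃)) := by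
    rw [← map_add, idb3]; simp only [map_add]
  have key : ((1:ℂ)/4) • (tv ^ 2 * C (e₃ * (e₁ * f₂ * (2 * h₁ + 1))))
        + ((1:ℂ)/4) • (tv ^ 2 * C (e₁ * f₂ * (2 * h₁ + 1) * e₃))
      = ((1:ℂ)/2) • (tv ^ 2 * C (e₁ ^ 2 * h₁))
        + (((1:ℂ)/4) • (tv ^ 2 * C (e₁ ^ 2))
          + ((1:ℂ)/2) • (tv ^ 2 * C (e₁ * f₂ * e₃))) := by
    calc ((1:ℂ)/4) • (tv ^ 2 * C (e₃ * (e₁ * f₂ * (2 * h₁ + 1))))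
          + ((1:ℂ)/4) • (tv ^ 2 * C (e₁ * f₂ * (2 * h₁ + 1) * e₃))
        = ((1:ℂ)/4) • (tv ^ 2 * (C (e₃ * (e₁ * f₂ * (2 * h₁ + 1)))
            + C (e₁ * f₂ * (2 * h₁ + 1) * e₃))) := by
          rw [mul_add (tv ^ 2) (C (e₃ * (e₁ * f₂ * (2 * h₁ + 1))))
            (C (e₁ * f₂ * (2 * h₁ + 1) * e₃))]
          module
      _ = _ := by rw [h2]; simp only [mul_add]; module
  have R1 : H₃ + ((1 : ℂ) / 16) • (T - T') ^ 2
      + ((1 : ℂ) / 4) • (tv * ((T - T') * F₂ * E₃))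
      = C h₃ + ((1:ℂ)/2) • (tv ^ 2 * C (e₁ ^ 2 * h₁))
        + ((1:ℂ)/4) • (tv ^ 2 * C (e₁ ^ 2))
        + ((1:ℂ)/2) • (tv ^ 2 * C (e₁ * f₂ * e₃)) := by
    unfold H₃ F₂ E₃
    rw [hTT, smul_pow, pow_two (tv * C e₁), sq_tvCe1,
      smul_mul_assoc, smul_mul_assoc, mul_smul_comm, tv_triple]
    module
  rw [L1, hU1, add_assoc, key, R1]
  module

/-- anticommutators `{E₂, F₂}` and `{E₃, F₃}` in `U(gl(2|1))[[t]]`. -/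
theorem statement5 :
    ac E₂ F₂ = H₂ - ((1 : ℂ) / 16) • (T - T') ^ 2
        - ((1 : ℂ) / 4) • (tv * ((T - T') * E₃ * F₂)) ∧
    ac E₃ F₃ = H₃ + ((1 : ℂ) / 16) • (T - T') ^ 2
        + ((1 : ℂ) / 4) • (tv * ((T - T') * F₂ * E₃)) := by
  exact ⟨stmt1, stmt2⟩

end SuperJordanian
end
end

section
/- In U(gl(2|1))[[t]] the deformed generators reproduce the classical root-vector definitions: F₂F₁ − F₁F₂ = F₃ and F₁E₃ − E₃F₁ = E₂. -/
noncomputable section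

namespace SuperJordanian

open scoped BigOperators

lemma rel0 (i j k l : Fin 3) (hp : par i j * par k l = 0) :
    e i j * e k l - e k l * e i j
      = (if j = k then e i l else 0) - (if l = i then e k j else 0) := by
  have h := RingQuot.mkAlgHom_rel ℂ (Rel.mk i j k l)
  simp only [hp, pow_zero, one_smul, map_sub, map_mul, apply_ite (RingQuot.mkAlgHom ℂ Rel),
    map_zero] at h
  exact h

lemma comm_f2_f1 : f₂ * f₁ - f₁ * f₂ = f₃ := by
  have h := rel0 2 1 1 0 (by decide)
  simpa [f₁, f₂, f₃] using h

lemma comm_f2_e1 : f₂ * e₁ = e₁ * f₂ := by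
  have h := rel0 2 1 0 1 (by decide)
  rw [if_neg (by decide), if_neg (by decide), sub_zero, sub_eq_zero] at h
  exact h

lemma comm_f2_h1 : f₂ * h₁ = h₁ * f₂ - f₂ := by
  have h00 := rel0 2 1 0 0 (by decide)
  have h11 := rel0 2 1 1 1 (by decide)
  rw [if_neg (by decide), if_neg (by decide), sub_zero, sub_eq_zero] at h00
  rw [if_pos rfl, if_neg (by decide), sub_zero, sub_eq_iff_eq_add] at h11
  show e 2 1 * (e 0 0 - e 1 1) = (e 0 0 - e 1 1) * e 2 1 - e 2 1
  rw [mul_sub, sub_mul, h00, h11]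
  abel

lemma comm_e3_h1 : e₃ * h₁ = h₁ * e₃ - e₃ := by
  have h00 := rel0 0 0 0 2 (by decide)
  have h11 := rel0 1 1 0 2 (by decide)
  rw [if_pos rfl, if_neg (by decide), sub_zero, sub_eq_iff_eq_add] at h00
  rw [if_neg (by decide), if_neg (by decide), sub_zero, sub_eq_zero] at h11
  show e 0 2 * (e 0 0 - e 1 1) = (e 0 0 - e 1 1) * e 0 2 - e 0 2
  rw [mul_sub, sub_mul, h00, ← h11]
  abel

lemma L1 : f₂ * (e₁ * (h₁ ^ 2 - 1)) - e₁ * (h₁ ^ 2 - 1) * f₂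
    = -(e₁ * f₂ * (2 * h₁ + 1)) := by
  have h1 := comm_f2_e1
  have h2 := comm_f2_h1
  have h3 : f₂ * (h₁ * h₁) = h₁ * (h₁ * f₂) - 2 * (h₁ * f₂) + f₂ := by
    rw [← mul_assoc, h2, sub_mul, mul_assoc, h2]; simp only [two_mul, mul_sub, sub_mul, mul_add, add_mul, mul_one, one_mul, mul_assoc] <;> abel
  have key : f₂ * (e₁ * (h₁ ^ 2 - 1)) = e₁ * (h₁ * (h₁ * f₂) - 2 * (h₁ * f₂) + f₂) - e₁ * f₂ := by
    rw [← mul_assoc, h1, mul_assoc, sq, mul_sub f₂, mul_one, h3]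
    simp only [two_mul, mul_sub, sub_mul, mul_add, add_mul, mul_one, one_mul, mul_assoc] <;> abel
  have h5 : f₂ * (2 * h₁ + 1) = 2 * (h₁ * f₂) - f₂ := by
    have : f₂ * (2 * h₁ + 1) = 2 * (f₂ * h₁) + f₂ := by simp only [two_mul, mul_sub, sub_mul, mul_add, add_mul, mul_one, one_mul, mul_assoc] <;> abel
    rw [this, h2]; simp only [two_mul, mul_sub, sub_mul, mul_add, add_mul, mul_one, one_mul, mul_assoc] <;> abel
  rw [key, mul_assoc (e₁ : U) f₂, h5, sq]
  simp only [two_mul, mul_sub, sub_mul, mul_add, add_mul, mul_one, one_mul, mul_assoc] <;> abel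

lemma L1' : e₁ * (h₁ ^ 2 - 1) * f₂ - f₂ * (e₁ * (h₁ ^ 2 - 1)) = e₁ * f₂ * (2 * h₁ + 1) := by
  rw [← neg_sub (f₂ * (e₁ * (h₁ ^ 2 - 1))), L1, neg_neg]

lemma L2 : f₁ * e₃ - e₃ * f₁ = e₂ := by
  have h := rel0 1 0 0 2 (by decide)
  simpa [f₁, e₃, e₂, show (2:Fin 3) ≠ 1 by decide] using h

lemma L3 : e₁ * (h₁ ^ 2 - 1) * e₃ - e₃ * (e₁ * (h₁ ^ 2 - 1)) = e₁ * e₃ * (2 * h₁ + 1) := by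
  have h1 := comm_e3_e1
  have h2 := comm_e3_h1
  have h3 : e₃ * (h₁ * h₁) = h₁ * (h₁ * e₃) - 2 * (h₁ * e₃) + e₃ := by
    rw [← mul_assoc, h2, sub_mul, mul_assoc, h2]; simp only [two_mul, mul_sub, sub_mul, mul_add, add_mul, mul_one, one_mul, mul_assoc] <;> abel
  have key : e₃ * (e₁ * (h₁ ^ 2 - 1)) = e₁ * (h₁ * (h₁ * e₃) - 2 * (h₁ * e₃) + e₃) - e₁ * e₃ := by
    rw [← mul_assoc, h1, mul_assoc, sq, mul_sub e₃, mul_one, h3]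
    simp only [two_mul, mul_sub, sub_mul, mul_add, add_mul, mul_one, one_mul, mul_assoc] <;> abel
  have h5 : e₃ * (2 * h₁ + 1) = 2 * (h₁ * e₃) - e₃ := by
    have : e₃ * (2 * h₁ + 1) = 2 * (e₃ * h₁) + e₃ := by simp only [two_mul, mul_sub, sub_mul, mul_add, add_mul, mul_one, one_mul, mul_assoc] <;> abel
    rw [this, h2]; simp only [two_mul, mul_sub, sub_mul, mul_add, add_mul, mul_one, one_mul, mul_assoc] <;> abel
  rw [key, mul_assoc (e₁ : U) e₃, h5, sq]
  simp only [two_mul, mul_sub, sub_mul, mul_add, add_mul, mul_one, one_mul, mul_assoc] <;> abel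

lemma key_comm (u : U) : C u * tv ^ 2 = tv ^ 2 * C u :=
  ((PowerSeries.commute_X (C u)).pow_right 2).eq

/-- the deformed generators reproduce the classical root-vector definitions. -/
theorem statement8 :
    F₂ * F₁ - F₁ * F₂ = F₃ ∧
    F₁ * E₃ - E₃ * F₁ = E₂ := by
  constructor
  · have h1 : (C f₂ : V) * (tv ^ 2 * C (e₁ * (h₁ ^ 2 - 1)))
        = tv ^ 2 * C (f₂ * (e₁ * (h₁ ^ 2 - 1))) := by
      rw [← mul_assoc, key_comm, mul_assoc, ← map_mul]
    have h2 : (tv ^ 2 * C (e₁ * (h₁ ^ 2 - 1))) * (C f₂ : V)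
        = tv ^ 2 * C (e₁ * (h₁ ^ 2 - 1) * f₂) := by
      rw [mul_assoc, ← map_mul, mul_assoc]
    rw [F₂, F₁, F₃,
      mul_sub (C f₂ : V) (C f₁), sub_mul (C f₁ : V) _ (C f₂),
      mul_smul_comm, smul_mul_assoc, h1, h2, ← map_mul, ← map_mul]
    have step : (C (f₂ * f₁) : V) - ((1:ℂ)/4) • (tv ^ 2 * C (f₂ * (e₁ * (h₁ ^ 2 - 1))))
        - (C (f₁ * f₂) - ((1:ℂ)/4) • (tv ^ 2 * C (e₁ * (h₁ ^ 2 - 1) * f₂)))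
        = (C (f₂ * f₁) - C (f₁ * f₂))
          + ((1:ℂ)/4) • (tv ^ 2 * C (e₁ * (h₁ ^ 2 - 1) * f₂)
            - tv ^ 2 * C (f₂ * (e₁ * (h₁ ^ 2 - 1)))) := by
      rw [smul_sub]; abel
    rw [step, ← map_sub, ← mul_sub, ← map_sub, comm_f2_f1, L1']
  · have h1 : (tv ^ 2 * C (e₁ * (h₁ ^ 2 - 1))) * (C e₃ : V)
        = tv ^ 2 * C (e₁ * (h₁ ^ 2 - 1) * e₃) := by
      rw [mul_assoc, ← map_mul, mul_assoc]
    have h2 : (C e₃ : V) * (tv ^ 2 * C (e₁ * (h₁ ^ 2 - 1)))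
        = tv ^ 2 * C (e₃ * (e₁ * (h₁ ^ 2 - 1))) := by
      rw [← mul_assoc, key_comm, mul_assoc, ← map_mul]
    rw [F₁, E₃, E₂,
      sub_mul (C f₁ : V) _ (C e₃), mul_sub (C e₃ : V) (C f₁),
      mul_smul_comm, smul_mul_assoc, h1, h2, ← map_mul, ← map_mul]
    have step : (C (f₁ * e₃) : V) - ((1:ℂ)/4) • (tv ^ 2 * C (e₁ * (h₁ ^ 2 - 1) * e₃))
        - (C (e₃ * f₁) - ((1:ℂ)/4) • (tv ^ 2 * C (e₃ * (e₁ * (h₁ ^ 2 - 1)))))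
        = (C (f₁ * e₃) - C (e₃ * f₁))
          - ((1:ℂ)/4) • (tv ^ 2 * C (e₁ * (h₁ ^ 2 - 1) * e₃)
            - tv ^ 2 * C (e₃ * (e₁ * (h₁ ^ 2 - 1)))) := by
      rw [smul_sub]; abel
    rw [step, ← map_sub, ← mul_sub, ← map_sub, L2, L3]

end SuperJordanian
end
end
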